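/- For all α > −1/2 and n ∈ ℕ, as ε → 0⁺ the rescaled function H_{2n}^{ε^{-2}}(εx) = (cosh εx)^{−α−β−ε^{-2}−2} P_n^{(α,ε^{-2})}(1 − 2 tanh²(εx)) converges pointwise to e^{−x²/2} L_n^α(x²), where L_n^a is the Laguerre polynomial L_n^a(t) = ((a+1)_n/n!) ₁F₁(−n; a+1; t). -/

import Mathlib

open Finset Filter

section Aux
open Topology

lemma tendsto_sinh_div' : Tendsto (fun t : ℝ => Real.sinh t / t) (𝓝[≠] (0:ℝ)) (𝓝 1) := by
  have h := (Real.hasDerivAt_sinh 0)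
  rw [Real.cosh_zero] at h
  have := hasDerivAt_iff_tendsto_slope.mp h
  refine this.congr' ?_
  filter_upwards [self_mem_nhdsWithin] with t ht
  simp [slope_def_field, Real.sinh_zero]

lemma tendsto_tanh_div' : Tendsto (fun t : ℝ => Real.tanh t / t) (𝓝[≠] (0:ℝ)) (𝓝 1) := by
  have hc : Tendsto (fun t : ℝ => (Real.cosh t)⁻¹) (𝓝[≠] (0:ℝ)) (𝓝 1) := by
    have : Tendsto (fun t : ℝ => (Real.cosh t)⁻¹) (𝓝 (0:ℝ)) (𝓝 1) := by
      have := (Real.continuous_cosh.tendsto 0).inv₀ (by simp [Real.cosh_zero])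
      simpa using this
    exact this.mono_left nhdsWithin_le_nhds
  have := tendsto_sinh_div'.mul hc
  simp only [mul_one] at this
  refine this.congr fun t => ?_
  rw [Real.tanh_eq_sinh_div_cosh]
  ring

lemma tendsto_cosh_sub_one_div' :
    Tendsto (fun t : ℝ => (Real.cosh t - 1) / t ^ 2) (𝓝[≠] (0:ℝ)) (𝓝 (1/2)) := by
  have hhalf : Tendsto (fun t : ℝ => t / 2) (𝓝[≠] (0:ℝ)) (𝓝[≠] (0:ℝ)) := by
    apply tendsto_nhdsWithin_of_tendsto_nhds_of_eventually_within
    · have : Tendsto (fun t : ℝ => t / 2) (𝓝 (0:ℝ)) (𝓝 (0/2)) := (tendsto_id.div_const 2)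
      simpa using this.mono_left nhdsWithin_le_nhds
    · filter_upwards [self_mem_nhdsWithin] with t ht
      simpa using (show t ≠ 0 from ht)
  have h1 : Tendsto (fun t : ℝ => Real.sinh (t/2) / (t/2)) (𝓝[≠] (0:ℝ)) (𝓝 1) :=
    tendsto_sinh_div'.comp hhalf
  have h2 := (h1.mul h1).div_const 2
  simp only [mul_one] at h2
  refine h2.congr fun t => ?_
  have hc : Real.cosh t - 1 = 2 * Real.sinh (t/2) ^ 2 := by
    have h := Real.cosh_two_mul (t/2)
    have h2 : Real.cosh (t/2) ^ 2 = 1 + Real.sinh (t/2) ^ 2 := by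
      have := Real.cosh_sq (t/2); linarith
    rw [show 2 * (t/2) = t by ring] at h
    rw [h, h2]; ring
  rcases eq_or_ne t 0 with rfl | ht
  · simp [Real.sinh_zero]
  · rw [hc]; field_simp

lemma tendsto_log_one_add_div' :
    Tendsto (fun u : ℝ => Real.log (1 + u) / u) (𝓝[≠] (0:ℝ)) (𝓝 1) := by
  have h := Real.hasDerivAt_log (one_ne_zero)
  rw [inv_one] at h
  have hs := hasDerivAt_iff_tendsto_slope.mp h
  have hmap : Tendsto (fun u : ℝ => 1 + u) (𝓝[≠] (0:ℝ)) (𝓝[≠] (1:ℝ)) := by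
    apply tendsto_nhdsWithin_of_tendsto_nhds_of_eventually_within
    · have : Tendsto (fun u : ℝ => 1 + u) (𝓝 (0:ℝ)) (𝓝 (1 + 0)) :=
        (tendsto_const_nhds.add tendsto_id)
      simpa using this.mono_left nhdsWithin_le_nhds
    · filter_upwards [self_mem_nhdsWithin] with u hu
      simpa using (show u ≠ 0 from hu)
  have := hs.comp hmap
  refine this.congr fun u => ?_
  simp [slope_def_field, Real.log_one]

lemma tendsto_log_cosh_div' :
    Tendsto (fun t : ℝ => Real.log (Real.cosh t) / t ^ 2) (𝓝[≠] (0:ℝ)) (𝓝 (1/2)) := by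
  have hmap : Tendsto (fun t : ℝ => Real.cosh t - 1) (𝓝[≠] (0:ℝ)) (𝓝[≠] (0:ℝ)) := by
    apply tendsto_nhdsWithin_of_tendsto_nhds_of_eventually_within
    · have : Tendsto (fun t : ℝ => Real.cosh t - 1) (𝓝 (0:ℝ)) (𝓝 (Real.cosh 0 - 1)) :=
        (Real.continuous_cosh.tendsto 0).sub tendsto_const_nhds
      simpa using this.mono_left nhdsWithin_le_nhds
    · filter_upwards [self_mem_nhdsWithin] with t ht
      have : 1 < Real.cosh t := Real.one_lt_cosh.mpr ht
      simpa using (by linarith : Real.cosh t - 1 ≠ 0)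
  have h1 := (tendsto_log_one_add_div'.comp hmap).mul tendsto_cosh_sub_one_div'
  simp only [one_mul] at h1
  refine h1.congr' ?_
  filter_upwards [self_mem_nhdsWithin] with t ht
  have h1lt : 1 < Real.cosh t := Real.one_lt_cosh.mpr ht
  have hne : Real.cosh t - 1 ≠ 0 := by linarith
  simp only [Function.comp]
  rw [show (1 : ℝ) + (Real.cosh t - 1) = Real.cosh t by ring]
  field_simp

end Aux

noncomputable def poch (a : ℝ) (k : ℕ) : ℝ := (ascPochhammer ℝ k).eval a

lemma poch_prod (a : ℝ) (k : ℕ) : poch a k = ∏ j ∈ range k, (a + j) := by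
  induction k with
  | zero => simp [poch]
  | succ k ih => rw [poch, ascPochhammer_succ_eval, ← poch, ih, Finset.prod_range_succ]

noncomputable def jacobiP (n : ℕ) (a b z : ℝ) : ℝ :=
  (poch (a + 1) n / (n.factorial : ℝ)) *
    ∑ k ∈ range (n + 1),
      ((-1 : ℝ) ^ k * ((n.factorial : ℝ) / ((n - k).factorial : ℝ)) * poch (a + b + n + 1) k /
          (poch (a + 1) k * (k.factorial : ℝ))) * ((1 - z) / 2) ^ k

/-- Laguerre polynomial L_n^a(t) = ((a+1)_n/n!) ₁F₁(-n; a+1; t). -/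
noncomputable def laguerreL (n : ℕ) (a t : ℝ) : ℝ :=
  (poch (a + 1) n / (n.factorial : ℝ)) *
    ∑ k ∈ range (n + 1),
      ((-1 : ℝ) ^ k * ((n.factorial : ℝ) / ((n - k).factorial : ℝ)) /
          (poch (a + 1) k * (k.factorial : ℝ))) * t ^ k

theorem H_even_to_hermite_limit (α β : ℝ) (h1 : α ≥ β) (h2 : β ≥ -(1/2)) (h3 : α > -(1/2))
    (n : ℕ) (x : ℝ) :
    Tendsto
      (fun ε : ℝ =>
        Real.cosh (ε * x) ^ (-α - β - 1 / ε ^ 2 - 2) *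
          jacobiP n α (1 / ε ^ 2) (1 - 2 * Real.tanh (ε * x) ^ 2))
      (nhdsWithin 0 (Set.Ioi 0))
      (nhds (Real.exp (-x ^ 2 / 2) * laguerreL n α (x ^ 2))) := by
  rcases eq_or_ne x 0 with rfl | hx
  · have key : ∀ ε : ℝ,
        Real.cosh (ε * 0) ^ (-α - β - 1 / ε ^ 2 - 2) *
          jacobiP n α (1 / ε ^ 2) (1 - 2 * Real.tanh (ε * 0) ^ 2)
        = Real.exp (-(0:ℝ) ^ 2 / 2) * laguerreL n α ((0:ℝ) ^ 2) := by
      intro ε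
      simp only [mul_zero, Real.cosh_zero, Real.tanh_zero, Real.one_rpow]
      rw [show (-(0:ℝ) ^ 2 / 2) = 0 by norm_num, Real.exp_zero, one_mul, one_mul,
        show ((0:ℝ) ^ 2) = 0 by norm_num]
      unfold jacobiP laguerreL
      congr 1
      apply Finset.sum_congr rfl
      intro k _
      rcases Nat.eq_zero_or_pos k with rfl | hk
      · simp [poch]
      · rw [show ((1:ℝ) - (1 - 2 * 0)) / 2 = 0 by norm_num,
          zero_pow (Nat.pos_iff_ne_zero.mp hk), mul_zero, mul_zero]
    rw [show (fun ε : ℝ =>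
        Real.cosh (ε * 0) ^ (-α - β - 1 / ε ^ 2 - 2) *
          jacobiP n α (1 / ε ^ 2) (1 - 2 * Real.tanh (ε * 0) ^ 2))
        = fun _ : ℝ => Real.exp (-(0:ℝ) ^ 2 / 2) * laguerreL n α ((0:ℝ) ^ 2) from funext key]
    exact tendsto_const_nhds
  · set F := nhdsWithin (0:ℝ) (Set.Ioi 0) with hF
    have hmap : Tendsto (fun ε : ℝ => ε * x) F (nhdsWithin 0 {(0:ℝ)}ᶜ) := by
      apply tendsto_nhdsWithin_of_tendsto_nhds_of_eventually_within
      · have : Tendsto (fun ε : ℝ => ε * x) (nhds 0) (nhds (0 * x)) :=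
          tendsto_id.mul_const x
        rw [zero_mul] at this
        exact this.mono_left nhdsWithin_le_nhds
      · filter_upwards [self_mem_nhdsWithin] with ε hε
        exact mul_ne_zero (ne_of_gt hε) hx
    have hεne : ∀ᶠ ε : ℝ in F, (ε : ℝ) ≠ 0 := by
      filter_upwards [self_mem_nhdsWithin] with ε hε
      exact ne_of_gt hε
    -- tanh(εx)^2/ε^2 → x^2
    have htanh2 : Tendsto (fun ε : ℝ => Real.tanh (ε * x) ^ 2 / ε ^ 2) F (nhds (x ^ 2)) := by
      have h1 : Tendsto (fun ε : ℝ => Real.tanh (ε * x) / (ε * x) * x) F (nhds (1 * x)) :=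
        (tendsto_tanh_div'.comp hmap).mul_const x
      rw [one_mul] at h1
      have h2 : Tendsto (fun ε : ℝ => Real.tanh (ε * x) ^ 2 / ε ^ 2) F (nhds (x * x)) := by
        refine (h1.mul h1).congr' ?_
        filter_upwards [hεne] with ε hε
        field_simp
      rw [show x ^ 2 = x * x from sq x]
      exact h2
    -- log cosh(εx)/ε^2 → x^2/2
    have hlogc : Tendsto (fun ε : ℝ => Real.log (Real.cosh (ε * x)) / ε ^ 2) F
        (nhds (x ^ 2 / 2)) := by
      have h1 := (tendsto_log_cosh_div'.comp hmap).mul_const (x ^ 2)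
      rw [show (1:ℝ)/2 * x ^ 2 = x ^ 2 / 2 by ring] at h1
      refine h1.congr' ?_
      filter_upwards [hεne] with ε hε
      simp only [Function.comp]
      rw [mul_pow]
      field_simp
    -- cosh factor
    have hL0 : Tendsto (fun ε : ℝ => Real.log (Real.cosh (ε * x))) F (nhds 0) := by
      have hc : Tendsto (fun ε : ℝ => Real.cosh (ε * x)) (nhds 0) (nhds 1) := by
        have hc' : Continuous fun ε : ℝ => Real.cosh (ε * x) :=
          Real.continuous_cosh.comp (continuous_id.mul continuous_const)
        have := hc'.tendsto 0
        simpa using this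
      have hcF : Tendsto (fun ε : ℝ => Real.cosh (ε * x)) F (nhds 1) :=
        hc.mono_left nhdsWithin_le_nhds
      have := (Real.continuousAt_log one_ne_zero).tendsto.comp hcF
      simpa [Function.comp_def] using this
    have harg : Tendsto (fun ε : ℝ =>
        Real.log (Real.cosh (ε * x)) * (-α - β - 1 / ε ^ 2 - 2)) F (nhds (-x ^ 2 / 2)) := by
      have h := (hL0.mul_const (-α - β - 2)).sub hlogc
      rw [zero_mul, zero_sub] at h
      rw [show -x ^ 2 / 2 = -(x ^ 2 / 2) by ring]
      refine h.congr fun ε => ?_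
      ring
    have hcosh : Tendsto (fun ε : ℝ => Real.cosh (ε * x) ^ (-α - β - 1 / ε ^ 2 - 2)) F
        (nhds (Real.exp (-x ^ 2 / 2))) := by
      have := (Real.continuous_exp.tendsto _).comp harg
      refine this.congr fun ε => ?_
      exact (Real.rpow_def_of_pos (Real.cosh_pos _) _).symm
    -- Jacobi → Laguerre
    have hjac : Tendsto (fun ε : ℝ => jacobiP n α (1 / ε ^ 2) (1 - 2 * Real.tanh (ε * x) ^ 2)) F
        (nhds (laguerreL n α (x ^ 2))) := by
      unfold jacobiP laguerreL
      refine Tendsto.const_mul _ ?_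
      refine tendsto_finset_sum _ fun k _ => ?_
      have hct : Continuous Real.tanh := by
        have he : Real.tanh = fun t => Real.sinh t / Real.cosh t :=
          funext fun t => Real.tanh_eq_sinh_div_cosh t
        rw [he]
        exact Real.continuous_sinh.div Real.continuous_cosh fun t => (Real.cosh_pos t).ne'
      have t0 : Tendsto (fun ε : ℝ => Real.tanh (ε * x) ^ 2) F (nhds 0) := by
        have hc' : Continuous fun ε : ℝ => Real.tanh (ε * x) ^ 2 :=
          (hct.comp (continuous_id.mul continuous_const)).pow 2
        have := hc'.tendsto 0
        simpa using this.mono_left nhdsWithin_le_nhds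
      have hfac : ∀ j ∈ range k, Tendsto
          (fun ε : ℝ => (α + 1 / ε ^ 2 + n + 1 + j) * Real.tanh (ε * x) ^ 2) F (nhds (x ^ 2)) := by
        intro j _
        have h := (t0.const_mul (α + n + 1 + j)).add htanh2
        rw [mul_zero, zero_add] at h
        refine h.congr fun ε => ?_
        ring
      have hprod := tendsto_finset_prod (range k) hfac
      have final := hprod.const_mul
        ((-1 : ℝ) ^ k * ((n.factorial : ℝ) / ((n - k).factorial : ℝ)) /
          (poch (α + 1) k * (k.factorial : ℝ)))
      rw [prod_const, card_range] at final
      refine final.congr fun ε => ?_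
      rw [Finset.prod_mul_distrib, prod_const, card_range, ← poch_prod,
        show ((1:ℝ) - (1 - 2 * Real.tanh (ε * x) ^ 2)) / 2 = Real.tanh (ε * x) ^ 2 by ring]
      ring
    have := hcosh.mul hjac
    exact this
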